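/- arXiv:2503.10971 — 2 statements merged into one kernel-verified Lean document; each statement's English description precedes it below -/
import Mathlib

section
/- Let n be a positive integer, δ > 0, γ > 0, and for each ε ∈ (0, 1/(nπ)) let k(ε) ∈ (0,1) be the unique solution of √(1+k²)·K(k) = 1/(2nε). Define a(ε) := 1 − (2/(1+k(ε)²))·(1 − E(k(ε))/K(k(ε))), b(ε) := ((1−k(ε)²)/(1+k(ε)²))², Q(ε) := 2(δ+2) − 3δ·a(ε), D(ε) := Q(ε)² + 24(δ+2)·b(ε), and τ(ε) := 2(δ+2)γ/(√(D(ε)) − Q(ε)). Then τ(ε)·exp(−√2/(n·ε)) → γ(δ+2)/192 as ε → 0⁺; that is, the critical time constant for the Hopf bifurcation satisfies τ(ε) = (γ(δ+2)/192)·exp(√2/(nε))·(1+o(1)). -/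
open Real Filter Set MeasureTheory

/-- The complete elliptic integral of the first kind. -/
noncomputable def Kint (k : ℝ) : ℝ :=
  ∫ s in (0:ℝ)..1, 1 / Real.sqrt ((1 - s ^ 2) * (1 - k ^ 2 * s ^ 2))

/-- The complete elliptic integral of the second kind. -/
noncomputable def Eint (k : ℝ) : ℝ :=
  ∫ s in (0:ℝ)..1, Real.sqrt ((1 - k ^ 2 * s ^ 2) / (1 - s ^ 2))

lemma intOn_inv_sqrt_one_sub :
    IntegrableOn (fun s : ℝ => 1 / Real.sqrt (1 - s)) (Set.Ioo 0 1) := by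
  have h : IntervalIntegrable (fun x : ℝ => x ^ (-(1/2) : ℝ)) volume 0 1 :=
    intervalIntegral.intervalIntegrable_rpow' (by norm_num)
  have h2 : IntervalIntegrable (fun x : ℝ => (1 - x) ^ (-(1/2) : ℝ)) volume 0 1 := by
    have := h.comp_sub_left 1
    simpa using this.symm
  have h3 : IntegrableOn (fun x : ℝ => (1 - x) ^ (-(1/2) : ℝ)) (Set.Ioo 0 1) := by
    have := (intervalIntegrable_iff_integrableOn_Ioo_of_le (by norm_num : (0:ℝ) ≤ 1)).1 h2
    exact this
  refine h3.congr_fun (fun x hx => ?_) measurableSet_Ioo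
  have h1x : (0:ℝ) ≤ 1 - x := by linarith [hx.2]
  beta_reduce
  rw [Real.rpow_neg h1x, Real.sqrt_eq_rpow]; norm_num

noncomputable def B0fun (u : ℝ) : ℝ := u / (Real.sqrt (1-u^2) * (1 + Real.sqrt (1-u^2)))

lemma B0fun_nonneg {u : ℝ} (hu : u ∈ Set.Ioo (0:ℝ) 1) : 0 ≤ B0fun u := by
  have := hu.1; have := hu.2
  unfold B0fun; positivity

lemma B0fun_le {u : ℝ} (hu : u ∈ Set.Ioo (0:ℝ) 1) : B0fun u ≤ 1 / Real.sqrt (1 - u) := by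
  obtain ⟨h0, h1⟩ := hu
  have hs : Real.sqrt (1-u) ≤ Real.sqrt (1-u^2) := by
    apply Real.sqrt_le_sqrt; nlinarith
  have hs0 : 0 < Real.sqrt (1-u) := Real.sqrt_pos.2 (by linarith)
  have hs1 : 0 < Real.sqrt (1-u^2) := lt_of_lt_of_le hs0 hs
  unfold B0fun
  rw [div_le_div_iff₀ (by positivity) hs0]
  have h2 : (1:ℝ) ≤ 1 + Real.sqrt (1-u^2) := by linarith [Real.sqrt_nonneg (1-u^2)]
  nlinarith
lemma msqrt : Measurable fun u : ℝ => Real.sqrt (1-u^2) :=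
  (measurable_const.sub (measurable_id'.pow_const 2)).sqrt

lemma B0fun_measurable : Measurable B0fun :=
  measurable_id'.div (msqrt.mul (measurable_const.add msqrt))

lemma intOn_B0fun : IntegrableOn B0fun (Set.Ioo 0 1) := by
  apply Integrable.mono' intOn_inv_sqrt_one_sub
    (B0fun_measurable.aestronglyMeasurable.restrict)
  · rw [ae_restrict_iff' measurableSet_Ioo]
    filter_upwards with u hu
    rw [Real.norm_eq_abs, abs_of_nonneg (B0fun_nonneg hu)]
    exact B0fun_le hu

lemma integral_B0 : ∫ u in Set.Ioo (0:ℝ) 1, B0fun u = Real.log 2 := by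
  have hcont : ContinuousOn (fun u : ℝ => -Real.log (1 + Real.sqrt (1-u^2))) (Set.Icc 0 1) := by
    apply ContinuousOn.neg
    apply ContinuousOn.log
    · exact (continuous_const.add ((continuous_const.sub (continuous_pow 2)).sqrt)).continuousOn
    · intro u _
      have := Real.sqrt_nonneg (1-u^2)
      positivity
  have hderiv : ∀ u ∈ Set.Ioo (0:ℝ) 1,
      HasDerivAt (fun u : ℝ => -Real.log (1 + Real.sqrt (1-u^2))) (B0fun u) u := by
    intro u hu
    obtain ⟨h0, h1⟩ := hu
    have hq : 0 < 1 - u^2 := by nlinarith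
    have hs : 0 < Real.sqrt (1-u^2) := Real.sqrt_pos.2 hq
    have d1 : HasDerivAt (fun u : ℝ => 1 - u^2) (-2*u) u := by
      simpa using ((hasDerivAt_pow 2 u).const_sub 1)
    have d2 : HasDerivAt (fun u : ℝ => Real.sqrt (1-u^2)) (-2*u / (2*Real.sqrt (1-u^2))) u := by
      have := (Real.hasDerivAt_sqrt (ne_of_gt hq)).comp u d1
      refine this.congr_deriv ?_
      field_simp
    have d3 : HasDerivAt (fun u : ℝ => 1 + Real.sqrt (1-u^2))
        (-2*u / (2*Real.sqrt (1-u^2))) u := d2.const_add 1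
    have d4 := (d3.log (by positivity)).neg
    refine d4.congr_deriv ?_
    unfold B0fun
    field_simp
  have hint : IntervalIntegrable B0fun volume 0 1 := by
    rw [intervalIntegrable_iff_integrableOn_Ioo_of_le (by norm_num : (0:ℝ) ≤ 1)]
    exact intOn_B0fun
  rw [← integral_Ioc_eq_integral_Ioo,
    ← intervalIntegral.integral_of_le (by norm_num : (0:ℝ) ≤ 1)]
  rw [intervalIntegral.integral_eq_sub_of_hasDeriv_right_of_le (by norm_num) hcont
    (fun u hu => (hderiv u hu).hasDerivWithinAt) hint]
  norm_num

noncomputable def Phi (c : ℝ) : ℝ :=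
  ∫ u in Set.Ioo (0:ℝ) 1, 1/(Real.sqrt (1-u^2) * Real.sqrt (c^2+u^2))

noncomputable def Bfun (c u : ℝ) : ℝ :=
  u^2 / (Real.sqrt (1-u^2) * (1+Real.sqrt (1-u^2)) * Real.sqrt (c^2+u^2))

lemma msqrt2 (c : ℝ) : Measurable fun u : ℝ => Real.sqrt (c^2+u^2) :=
  (measurable_const.add (measurable_id'.pow_const 2)).sqrt

lemma Bfun_measurable (c : ℝ) : Measurable (Bfun c) :=
  (measurable_id'.pow_const 2).div
    ((msqrt.mul (measurable_const.add msqrt)).mul (msqrt2 c))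

lemma Bfun_nonneg (c : ℝ) {u : ℝ} (hu : u ∈ Set.Ioo (0:ℝ) 1) : 0 ≤ Bfun c u := by
  have h0 := hu.1; have h1 := hu.2
  have hq : (0:ℝ) < 1 - u^2 := by nlinarith
  have hs := Real.sqrt_nonneg (1-u^2)
  have ht := Real.sqrt_nonneg (c^2+u^2)
  unfold Bfun; positivity

lemma Bfun_le_B0fun (c : ℝ) {u : ℝ} (hu : u ∈ Set.Ioo (0:ℝ) 1) : Bfun c u ≤ B0fun u := by
  have h0 := hu.1; have h1 := hu.2
  have hq : (0:ℝ) < 1 - u^2 := by nlinarith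
  have hs : 0 < Real.sqrt (1-u^2) := Real.sqrt_pos.2 hq
  have hD : 0 < Real.sqrt (1-u^2) * (1+Real.sqrt (1-u^2)) := by positivity
  have ht : u ≤ Real.sqrt (c^2+u^2) := by
    have : Real.sqrt (u^2) ≤ Real.sqrt (c^2+u^2) := Real.sqrt_le_sqrt (by nlinarith)
    rwa [Real.sqrt_sq h0.le] at this
  have hB0 : B0fun u = u^2 / (Real.sqrt (1-u^2) * (1+Real.sqrt (1-u^2)) * u) := by
    unfold B0fun
    rw [eq_div_iff (by positivity)]
    field_simp
  rw [hB0]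
  unfold Bfun
  apply div_le_div_of_nonneg_left (by positivity) (by positivity)
  nlinarith

lemma tendsto_B : Tendsto (fun c => ∫ u in Set.Ioo (0:ℝ) 1, Bfun c u)
    (nhdsWithin (0:ℝ) (Set.Ioi 0)) (nhds (Real.log 2)) := by
  rw [← integral_B0]
  apply MeasureTheory.tendsto_integral_filter_of_dominated_convergence
    (fun u => 1 / Real.sqrt (1 - u))
  · filter_upwards with c
    exact ((Bfun_measurable c).aestronglyMeasurable).restrict
  · filter_upwards with c
    rw [ae_restrict_iff' measurableSet_Ioo]
    filter_upwards with u hu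
    rw [Real.norm_eq_abs, abs_of_nonneg (Bfun_nonneg c hu)]
    exact le_trans (Bfun_le_B0fun c hu) (B0fun_le hu)
  · exact intOn_inv_sqrt_one_sub
  · rw [ae_restrict_iff' measurableSet_Ioo]
    filter_upwards with u hu
    have h0 := hu.1; have h1 := hu.2
    have hq : (0:ℝ) < 1 - u^2 := by nlinarith
    have hs : 0 < Real.sqrt (1-u^2) := Real.sqrt_pos.2 hq
    have t1 : Tendsto (fun c : ℝ => Real.sqrt (c^2+u^2)) (nhds 0) (nhds u) := by
      have hc : Continuous fun c : ℝ => Real.sqrt (c^2+u^2) :=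
        ((continuous_pow 2).add continuous_const).sqrt
      have h := hc.tendsto 0
      simpa [Real.sqrt_sq h0.le] using h
    have hne : Real.sqrt (1-u^2) * (1+Real.sqrt (1-u^2)) * u ≠ 0 := by positivity
    have t2 : Tendsto (fun c : ℝ => Bfun c u) (nhds 0)
        (nhds (u^2 / (Real.sqrt (1-u^2) * (1+Real.sqrt (1-u^2)) * u))) := by
      exact tendsto_const_nhds.div (tendsto_const_nhds.mul t1) hne
    have hval : u^2 / (Real.sqrt (1-u^2) * (1+Real.sqrt (1-u^2)) * u) = B0fun u := by
      unfold B0fun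
      rw [div_eq_div_iff hne (by positivity)]
      ring
    rw [hval] at t2
    exact t2.mono_left nhdsWithin_le_nhds

lemma integral_A {c : ℝ} (hc : 0 < c) :
    ∫ u in Set.Ioo (0:ℝ) 1, 1 / Real.sqrt (c^2 + u^2) = Real.arsinh (1/c) := by
  have hcont : Continuous fun u : ℝ => 1 / Real.sqrt (c^2 + u^2) := by
    apply Continuous.div continuous_const
    · exact (continuous_const.add (continuous_pow 2)).sqrt
    · intro u
      positivity
  have hderiv : ∀ u : ℝ, HasDerivAt (fun u : ℝ => Real.arsinh (u / c))
      (1 / Real.sqrt (c^2 + u^2)) u := by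
    intro u
    have h1 : HasDerivAt (fun u : ℝ => u / c) (1/c) u := (hasDerivAt_id u).div_const c
    have h2 := (Real.hasDerivAt_arsinh (u/c)).comp u h1
    refine h2.congr_deriv ?_
    have hsq : Real.sqrt (1 + (u/c)^2) = Real.sqrt (c^2 + u^2) / c := by
      rw [eq_div_iff (ne_of_gt hc), ← Real.sqrt_sq hc.le]
      · rw [← Real.sqrt_mul (by positivity)]
        congr 1
        field_simp
        rw [Real.sq_sqrt (sq_nonneg c)]
    rw [hsq]
    field_simp
  rw [← integral_Ioc_eq_integral_Ioo,
    ← intervalIntegral.integral_of_le (by norm_num : (0:ℝ) ≤ 1)]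
  rw [intervalIntegral.integral_eq_sub_of_hasDerivAt (fun u _ => hderiv u)
    (hcont.intervalIntegrable 0 1)]
  simp [Real.arsinh_zero]

lemma Phi_split {c : ℝ} (hc : 0 < c) :
    Phi c = Real.arsinh (1/c) + ∫ u in Set.Ioo (0:ℝ) 1, Bfun c u := by
  have hAcont : Continuous fun u : ℝ => 1 / Real.sqrt (c^2 + u^2) := by
    apply Continuous.div continuous_const
    · exact (continuous_const.add (continuous_pow 2)).sqrt
    · intro u; positivity
  have hAint : IntegrableOn (fun u : ℝ => 1 / Real.sqrt (c^2 + u^2)) (Set.Ioo 0 1) :=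
    (hAcont.integrableOn_Icc (a := 0) (b := 1)).mono_set Set.Ioo_subset_Icc_self
  have hBint : IntegrableOn (Bfun c) (Set.Ioo 0 1) := by
    apply Integrable.mono' intOn_inv_sqrt_one_sub
      ((Bfun_measurable c).aestronglyMeasurable.restrict)
    rw [ae_restrict_iff' measurableSet_Ioo]
    filter_upwards with u hu
    rw [Real.norm_eq_abs, abs_of_nonneg (Bfun_nonneg c hu)]
    exact le_trans (Bfun_le_B0fun c hu) (B0fun_le hu)
  have hsplit : ∀ u ∈ Set.Ioo (0:ℝ) 1,
      1/(Real.sqrt (1-u^2) * Real.sqrt (c^2+u^2))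
        = 1 / Real.sqrt (c^2 + u^2) + Bfun c u := by
    intro u hu
    have h0 := hu.1; have h1 := hu.2
    have hq : (0:ℝ) < 1 - u^2 := by nlinarith
    have hs : 0 < Real.sqrt (1-u^2) := Real.sqrt_pos.2 hq
    have ht : 0 < Real.sqrt (c^2+u^2) := Real.sqrt_pos.2 (by positivity)
    have hs2 : Real.sqrt (1-u^2) ^ 2 = 1 - u^2 := Real.sq_sqrt hq.le
    unfold Bfun
    rw [div_add_div _ _ (ne_of_gt ht) (by positivity), div_eq_div_iff (by positivity) (by positivity)]
    linear_combination (-(Real.sqrt (1-u^2)) * Real.sqrt (c^2+u^2)^2) * hs2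
  unfold Phi
  rw [MeasureTheory.setIntegral_congr_fun measurableSet_Ioo hsplit,
    MeasureTheory.integral_add hAint hBint, integral_A hc]

lemma Phi_asymp : Tendsto (fun c => Phi c + Real.log c)
    (nhdsWithin (0:ℝ) (Set.Ioi 0)) (nhds (Real.log 4)) := by
  have key : ∀ c ∈ Set.Ioi (0:ℝ),
      Real.log (1 + Real.sqrt (1 + c^2)) + (∫ u in Set.Ioo (0:ℝ) 1, Bfun c u)
        = Phi c + Real.log c := by
    intro c hc
    have hc' : (0:ℝ) < c := hc
    have hc0 : c ≠ 0 := ne_of_gt hc'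
    rw [Phi_split hc']
    have hkey : c * Real.sqrt (1 + (1/c)^2) = Real.sqrt (1 + c^2) := by
      have h1 : (1:ℝ) + c^2 = c^2 * (1 + (1/c)^2) := by
        field_simp
        ring
      rw [h1, Real.sqrt_mul (sq_nonneg c), Real.sqrt_sq hc'.le]
    have harsinh : Real.arsinh (1/c) + Real.log c = Real.log (1 + Real.sqrt (1 + c^2)) := by
      have hpos : (0:ℝ) < 1/c + Real.sqrt (1 + (1/c)^2) := by positivity
      simp only [Real.arsinh]
      rw [← Real.log_mul (ne_of_gt hpos) hc0]
      congr 1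
      rw [add_mul, mul_comm (Real.sqrt (1 + (1/c)^2)) c, hkey]
      rw [one_div, inv_mul_cancel₀ hc0]
    linarith [harsinh]
  have t_log : Tendsto (fun c : ℝ => Real.log (1 + Real.sqrt (1 + c^2)))
      (nhdsWithin (0:ℝ) (Set.Ioi 0)) (nhds (Real.log 2)) := by
    have hcont : Continuous fun c : ℝ => 1 + Real.sqrt (1 + c^2) :=
      continuous_const.add ((continuous_const.add (continuous_pow 2)).sqrt)
    have h2 : Tendsto (fun c : ℝ => 1 + Real.sqrt (1 + c^2)) (nhds 0) (nhds 2) := by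
      have h3 := hcont.tendsto 0
      have h4 : (1:ℝ) + Real.sqrt (1 + (0:ℝ)^2) = 2 := by
        norm_num
      rwa [h4] at h3
    have := (Real.continuousAt_log (x := 2) (by norm_num)).tendsto.comp h2
    exact this.mono_left nhdsWithin_le_nhds
  have hsum := t_log.add tendsto_B
  have hlog4 : Real.log 2 + Real.log 2 = Real.log 4 := by
    rw [← Real.log_mul two_ne_zero two_ne_zero]; norm_num
  rw [hlog4] at hsum
  exact hsum.congr' (eventually_mem_nhdsWithin.mono key)

lemma Kint_mul {k : ℝ} (hk : k ∈ Set.Ioo (0:ℝ) 1) :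
    k * Kint k = Phi (Real.sqrt (1-k^2)/k) := by
  obtain ⟨hk0, hk1⟩ := hk
  have hk2 : (0:ℝ) < 1 - k^2 := by nlinarith
  set c : ℝ := Real.sqrt (1-k^2)/k with hc_def
  have hcpos : 0 < c := by positivity
  have hc2 : c^2 = (1-k^2)/k^2 := by
    rw [hc_def, div_pow, Real.sq_sqrt hk2.le]
  set f : ℝ → ℝ := fun u => Real.sqrt (1-u^2) with hf_def
  have hderiv : ∀ u ∈ Set.Ioo (0:ℝ) 1,
      HasDerivWithinAt f (-u / Real.sqrt (1-u^2)) (Set.Ioo 0 1) u := by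
    intro u hu
    obtain ⟨h0, h1⟩ := hu
    have hq : (0:ℝ) < 1 - u^2 := by nlinarith
    have d1 : HasDerivAt (fun u : ℝ => 1 - u^2) (-2*u) u := by
      simpa using ((hasDerivAt_pow 2 u).const_sub 1)
    have d2 := (Real.hasDerivAt_sqrt (ne_of_gt hq)).comp u d1
    have : HasDerivAt f (-u / Real.sqrt (1-u^2)) u := by
      refine d2.congr_deriv ?_
      field_simp
    exact this.hasDerivWithinAt
  have hinj : Set.InjOn f (Set.Ioo 0 1) := by
    intro x hx y hy hxy
    have hx2 : (0:ℝ) ≤ 1 - x^2 := by nlinarith [hx.1, hx.2]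
    have hy2 : (0:ℝ) ≤ 1 - y^2 := by nlinarith [hy.1, hy.2]
    have := (Real.sqrt_inj hx2 hy2).1 hxy
    nlinarith [hx.1, hy.1]
  have himg : f '' Set.Ioo 0 1 = Set.Ioo 0 1 := by
    ext y
    constructor
    · rintro ⟨u, hu, rfl⟩
      obtain ⟨h0, h1⟩ := hu
      have hq : (0:ℝ) < 1 - u^2 := by nlinarith
      constructor
      · exact Real.sqrt_pos.2 hq
      · exact (Real.sqrt_lt' one_pos).2 (by nlinarith)
    · rintro ⟨h0, h1⟩
      refine ⟨Real.sqrt (1-y^2), ⟨?_, ?_⟩, ?_⟩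
      · exact Real.sqrt_pos.2 (by nlinarith)
      · exact (Real.sqrt_lt' one_pos).2 (by nlinarith)
      · rw [hf_def]
        simp only
        rw [Real.sq_sqrt (by nlinarith : (0:ℝ) ≤ 1 - y^2)]
        rw [show (1:ℝ) - (1 - y^2) = y^2 by ring, Real.sqrt_sq h0.le]
  have key := MeasureTheory.integral_image_eq_integral_abs_deriv_smul
    measurableSet_Ioo hderiv hinj
    (fun s => 1 / Real.sqrt ((1 - s ^ 2) * (1 - k ^ 2 * s ^ 2)))
  rw [himg] at key
  have hKint : Kint k = ∫ s in Set.Ioo (0:ℝ) 1,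
      1 / Real.sqrt ((1 - s ^ 2) * (1 - k ^ 2 * s ^ 2)) := by
    rw [Kint, intervalIntegral.integral_of_le (by norm_num : (0:ℝ) ≤ 1),
      integral_Ioc_eq_integral_Ioo]
  have hpt : ∀ u ∈ Set.Ioo (0:ℝ) 1,
      |(-u / Real.sqrt (1-u^2))| • (1 / Real.sqrt ((1 - (f u) ^ 2) * (1 - k ^ 2 * (f u) ^ 2)))
        = (1/k) * (1/(Real.sqrt (1-u^2) * Real.sqrt (c^2+u^2))) := by
    intro u hu
    obtain ⟨h0, h1⟩ := hu
    have hq : (0:ℝ) < 1 - u^2 := by nlinarith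
    have hs : 0 < Real.sqrt (1-u^2) := Real.sqrt_pos.2 hq
    have hfu2 : (f u)^2 = 1 - u^2 := Real.sq_sqrt hq.le
    have habs : |(-u / Real.sqrt (1-u^2))| = u / Real.sqrt (1-u^2) := by
      rw [abs_div, abs_neg, abs_of_nonneg h0.le, abs_of_nonneg hs.le]
    rw [habs, smul_eq_mul, hfu2]
    have h1' : (1:ℝ) - (1 - u^2) = u^2 := by ring
    have h2' : (1:ℝ) - k^2*(1-u^2) = k^2*(c^2+u^2) := by
      rw [hc2]
      field_simp
      ring
    rw [h1', h2']
    rw [Real.sqrt_mul (sq_nonneg u), Real.sqrt_sq h0.le,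
      Real.sqrt_mul (sq_nonneg k), Real.sqrt_sq hk0.le]
    have htpos : 0 < Real.sqrt (c^2+u^2) := Real.sqrt_pos.2 (by positivity)
    field_simp
  rw [hKint, key, MeasureTheory.setIntegral_congr_fun measurableSet_Ioo hpt,
    MeasureTheory.integral_const_mul]
  rw [Phi]
  field_simp

lemma tendsto_c : Tendsto (fun k : ℝ => Real.sqrt (1-k^2)/k)
    (nhdsWithin 1 (Set.Ioo (0:ℝ) 1)) (nhdsWithin 0 (Set.Ioi 0)) := by
  rw [tendsto_nhdsWithin_iff]
  constructor
  · have hct : ContinuousAt (fun k : ℝ => Real.sqrt (1-k^2)/k) 1 := by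
      apply ContinuousAt.div
      · exact ((continuous_const.sub (continuous_pow 2)).sqrt).continuousAt
      · exact continuousAt_id
      · norm_num
    have h := hct.tendsto.mono_left
      (nhdsWithin_le_nhds : nhdsWithin 1 (Set.Ioo (0:ℝ) 1) ≤ nhds 1)
    convert h using 2
    norm_num
  · filter_upwards [eventually_mem_nhdsWithin] with x hx
    have h0 := hx.1; have h1 := hx.2
    have : (0:ℝ) < 1 - x^2 := by nlinarith
    exact div_pos (Real.sqrt_pos.2 this) h0

lemma tendsto_one_sub_sq : Tendsto (fun k : ℝ => 1 - k^2)
    (nhdsWithin 1 (Set.Ioo (0:ℝ) 1)) (nhdsWithin 0 (Set.Ioi 0)) := by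
  rw [tendsto_nhdsWithin_iff]
  constructor
  · have hct : ContinuousAt (fun k : ℝ => 1 - k^2) 1 :=
      (continuous_const.sub (continuous_pow 2)).continuousAt
    have h := hct.tendsto.mono_left
      (nhdsWithin_le_nhds : nhdsWithin 1 (Set.Ioo (0:ℝ) 1) ≤ nhds 1)
    convert h using 2
    norm_num
  · filter_upwards [eventually_mem_nhdsWithin] with x hx
    have h0 := hx.1; have h1 := hx.2
    show (0:ℝ) < 1 - x^2
    nlinarith

lemma tendsto_xlogx : Tendsto (fun x : ℝ => x * Real.log x)
    (nhdsWithin 0 (Set.Ioi 0)) (nhds 0) := by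
  have h := tendsto_log_mul_rpow_nhdsGT_zero (r := 1) one_pos
  exact h.congr (fun x => by rw [Real.rpow_one, mul_comm])

lemma K_asymp : Tendsto (fun k => Kint k + Real.log (Real.sqrt (1-k^2)))
    (nhdsWithin 1 (Set.Ioo (0:ℝ) 1)) (nhds (Real.log 4)) := by
  have t_main : Tendsto (fun k : ℝ => Phi (Real.sqrt (1-k^2)/k) + Real.log (Real.sqrt (1-k^2)/k))
      (nhdsWithin 1 (Set.Ioo (0:ℝ) 1)) (nhds (Real.log 4)) := Phi_asymp.comp tendsto_c
  have L1 : Tendsto (fun k : ℝ => 1/k) (nhdsWithin 1 (Set.Ioo (0:ℝ) 1)) (nhds 1) := by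
    have hct : ContinuousAt (fun k : ℝ => 1/k) 1 := by
      apply ContinuousAt.div continuousAt_const continuousAt_id; norm_num
    have h := hct.tendsto.mono_left
      (nhdsWithin_le_nhds : nhdsWithin 1 (Set.Ioo (0:ℝ) 1) ≤ nhds 1)
    convert h using 2
    norm_num
  have L3 : Tendsto (fun k : ℝ => (1 - 1/k) * Real.log (Real.sqrt (1-k^2)))
      (nhdsWithin 1 (Set.Ioo (0:ℝ) 1)) (nhds 0) := by
    have g1 : Tendsto (fun k : ℝ => -(1/(2*k*(1+k))))
        (nhdsWithin 1 (Set.Ioo (0:ℝ) 1)) (nhds (-(1/4))) := by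
      have hct : ContinuousAt (fun k : ℝ => -(1/(2*k*(1+k)))) 1 := by
        apply ContinuousAt.neg
        apply ContinuousAt.div continuousAt_const
        · exact ((continuousAt_const.mul continuousAt_id).mul
            (continuousAt_const.add continuousAt_id))
        · norm_num
      have h := hct.tendsto.mono_left
        (nhdsWithin_le_nhds : nhdsWithin 1 (Set.Ioo (0:ℝ) 1) ≤ nhds 1)
      convert h using 2
      norm_num
    have g2 : Tendsto (fun k : ℝ => (1-k^2) * Real.log (1-k^2))
        (nhdsWithin 1 (Set.Ioo (0:ℝ) 1)) (nhds 0) := tendsto_xlogx.comp tendsto_one_sub_sq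
    have hmul := g1.mul g2
    rw [show (-(1/4:ℝ)) * 0 = 0 by ring] at hmul
    apply hmul.congr'
    filter_upwards [eventually_mem_nhdsWithin] with x hx
    have h0 := hx.1; have h1 := hx.2
    have hq : (0:ℝ) < 1 - x^2 := by nlinarith
    rw [Real.log_sqrt hq.le]
    field_simp
    ring
  have L4 : Tendsto (fun k : ℝ => (1/k) * Real.log k)
      (nhdsWithin 1 (Set.Ioo (0:ℝ) 1)) (nhds 0) := by
    have hct : ContinuousAt (fun k : ℝ => (1/k) * Real.log k) 1 := by
      apply ContinuousAt.mul
      · apply ContinuousAt.div continuousAt_const continuousAt_id; norm_num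
      · exact Real.continuousAt_log (by norm_num)
    have h := hct.tendsto.mono_left
      (nhdsWithin_le_nhds : nhdsWithin 1 (Set.Ioo (0:ℝ) 1) ≤ nhds 1)
    convert h using 2
    norm_num
  have hsum := ((L1.mul t_main).add L3).add L4
  rw [show (1:ℝ) * Real.log 4 + 0 + 0 = Real.log 4 by ring] at hsum
  apply hsum.congr'
  filter_upwards [eventually_mem_nhdsWithin] with x hx
  have h0 := hx.1; have h1 := hx.2
  have hq : (0:ℝ) < 1 - x^2 := by nlinarith
  have hs : 0 < Real.sqrt (1-x^2) := Real.sqrt_pos.2 hq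
  have hlogc : Real.log (Real.sqrt (1-x^2)/x) = Real.log (Real.sqrt (1-x^2)) - Real.log x :=
    Real.log_div (ne_of_gt hs) (ne_of_gt h0)
  have hKm : Phi (Real.sqrt (1-x^2)/x) = x * Kint x := (Kint_mul hx).symm
  rw [hKm, hlogc]
  field_simp
  ring

lemma oneSubSq_K : Tendsto (fun k : ℝ => (1-k^2) * Kint k)
    (nhdsWithin 1 (Set.Ioo (0:ℝ) 1)) (nhds 0) := by
  have h1 := (tendsto_one_sub_sq.mono_right nhdsWithin_le_nhds).mul K_asymp
  rw [zero_mul] at h1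
  have h2 : Tendsto (fun k : ℝ => (1-k^2) * Real.log (Real.sqrt (1-k^2)))
      (nhdsWithin 1 (Set.Ioo (0:ℝ) 1)) (nhds 0) := by
    have h3 := (tendsto_xlogx.comp tendsto_one_sub_sq).div_const 2
    rw [zero_div] at h3
    apply h3.congr'
    filter_upwards [eventually_mem_nhdsWithin] with x hx
    have h0 := hx.1; have h1 := hx.2
    have hq : (0:ℝ) < 1 - x^2 := by nlinarith
    show (1-x^2) * Real.log (1-x^2) / 2 = (1-x^2) * Real.log (Real.sqrt (1-x^2))
    rw [Real.log_sqrt hq.le]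
    ring
  have := h1.sub h2
  rw [sub_zero] at this
  exact this.congr (fun x => by ring)

noncomputable def CE : ℝ := ∫ u in Set.Ioo (0:ℝ) 1, 1 / Real.sqrt (1 - u)

lemma Eint_nonneg (k : ℝ) : 0 ≤ Eint k := by
  apply intervalIntegral.integral_nonneg (by norm_num : (0:ℝ) ≤ 1)
  intro u _
  exact Real.sqrt_nonneg _

lemma Eint_le {k : ℝ} (hk : k ∈ Set.Ioo (0:ℝ) 1) : Eint k ≤ CE := by
  have hmeas : Measurable fun s : ℝ => Real.sqrt ((1 - k ^ 2 * s ^ 2) / (1 - s ^ 2)) :=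
    ((measurable_const.sub (measurable_const.mul (measurable_id'.pow_const 2))).div
      (measurable_const.sub (measurable_id'.pow_const 2))).sqrt
  have hbound : ∀ s ∈ Set.Ioo (0:ℝ) 1,
      Real.sqrt ((1 - k ^ 2 * s ^ 2) / (1 - s ^ 2)) ≤ 1 / Real.sqrt (1 - s) := by
    intro s hs
    obtain ⟨h0, h1⟩ := hs
    have hk0 := hk.1; have hk1 := hk.2
    have hq : (0:ℝ) < 1 - s^2 := by nlinarith
    have hq1 : (0:ℝ) < 1 - s := by linarith
    have harg : (1 - k ^ 2 * s ^ 2) / (1 - s ^ 2) ≤ 1 / (1-s) := by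
      rw [div_le_div_iff₀ hq hq1]
      nlinarith [mul_nonneg hq1.le (by positivity : (0:ℝ) ≤ s + k^2*s^2)]
    calc Real.sqrt ((1 - k ^ 2 * s ^ 2) / (1 - s ^ 2)) ≤ Real.sqrt (1/(1-s)) :=
          Real.sqrt_le_sqrt harg
      _ = 1 / Real.sqrt (1-s) := by
          rw [one_div, one_div, Real.sqrt_inv]
  have hint : IntegrableOn (fun s : ℝ => Real.sqrt ((1 - k ^ 2 * s ^ 2) / (1 - s ^ 2)))
      (Set.Ioo 0 1) := by
    apply Integrable.mono' intOn_inv_sqrt_one_sub hmeas.aestronglyMeasurable.restrict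
    rw [ae_restrict_iff' measurableSet_Ioo]
    filter_upwards with u hu
    rw [Real.norm_eq_abs, abs_of_nonneg (Real.sqrt_nonneg _)]
    exact hbound u hu
  have : Eint k = ∫ s in Set.Ioo (0:ℝ) 1, Real.sqrt ((1 - k ^ 2 * s ^ 2) / (1 - s ^ 2)) := by
    rw [Eint, intervalIntegral.integral_of_le (by norm_num : (0:ℝ) ≤ 1),
      integral_Ioc_eq_integral_Ioo]
  rw [this, CE]
  exact MeasureTheory.setIntegral_mono_on hint intOn_inv_sqrt_one_sub measurableSet_Ioo hbound

lemma Kint_integrand_intOn {k : ℝ} (hk : k ∈ Set.Ioo (0:ℝ) 1) :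
    IntegrableOn (fun s : ℝ => 1 / Real.sqrt ((1 - s ^ 2) * (1 - k ^ 2 * s ^ 2)))
      (Set.Ioo 0 1) := by
  have hk0 := hk.1; have hk1 := hk.2
  have hk2 : (0:ℝ) < 1 - k^2 := by nlinarith
  have hmeas : Measurable fun s : ℝ => 1 / Real.sqrt ((1 - s ^ 2) * (1 - k ^ 2 * s ^ 2)) :=
    measurable_const.div (((measurable_const.sub (measurable_id'.pow_const 2)).mul
      (measurable_const.sub (measurable_const.mul (measurable_id'.pow_const 2)))).sqrt)
  have hCint : IntegrableOn (fun s : ℝ => (1/Real.sqrt (1-k^2)) * (1 / Real.sqrt (1 - s)))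
      (Set.Ioo 0 1) := intOn_inv_sqrt_one_sub.const_mul _
  apply Integrable.mono' hCint hmeas.aestronglyMeasurable.restrict
  rw [ae_restrict_iff' measurableSet_Ioo]
  filter_upwards with s hs
  obtain ⟨h0, h1⟩ := hs
  have hq : (0:ℝ) < 1 - s^2 := by nlinarith
  have hq1 : (0:ℝ) < 1 - s := by linarith
  have hks : (0:ℝ) < 1 - k^2*s^2 := by nlinarith
  rw [Real.norm_eq_abs, abs_of_nonneg (by positivity)]
  have hle : Real.sqrt ((1-k^2) * (1-s)) ≤ Real.sqrt ((1 - s ^ 2) * (1 - k ^ 2 * s ^ 2)) := by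
    apply Real.sqrt_le_sqrt
    have e1 : 1-k^2 ≤ 1-k^2*s^2 := by nlinarith
    have e2 : 1-s ≤ 1-s^2 := by nlinarith
    have := mul_le_mul e1 e2 hq1.le (by linarith)
    nlinarith
  rw [Real.sqrt_mul hk2.le] at hle
  have hpos1 : 0 < Real.sqrt (1-k^2) := Real.sqrt_pos.2 hk2
  have hpos2 : 0 < Real.sqrt (1-s) := Real.sqrt_pos.2 hq1
  have hpos3 : 0 < Real.sqrt ((1 - s ^ 2) * (1 - k ^ 2 * s ^ 2)) := Real.sqrt_pos.2 (by positivity)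
  calc (1:ℝ) / Real.sqrt ((1 - s ^ 2) * (1 - k ^ 2 * s ^ 2))
      ≤ 1 / (Real.sqrt (1-k^2) * Real.sqrt (1-s)) := by
        apply one_div_le_one_div_of_le (by positivity) hle
    _ = 1/Real.sqrt (1-k^2) * (1/Real.sqrt (1-s)) := by
        rw [one_div, mul_inv, one_div, one_div]
  
lemma Kint_mono {k₁ k₂ : ℝ} (h1 : k₁ ∈ Set.Ioo (0:ℝ) 1) (h2 : k₂ ∈ Set.Ioo (0:ℝ) 1)
    (h : k₁ ≤ k₂) : Kint k₁ ≤ Kint k₂ := by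
  have e1 : Kint k₁ = ∫ s in Set.Ioo (0:ℝ) 1, 1 / Real.sqrt ((1 - s ^ 2) * (1 - k₁ ^ 2 * s ^ 2)) := by
    rw [Kint, intervalIntegral.integral_of_le (by norm_num : (0:ℝ) ≤ 1),
      integral_Ioc_eq_integral_Ioo]
  have e2 : Kint k₂ = ∫ s in Set.Ioo (0:ℝ) 1, 1 / Real.sqrt ((1 - s ^ 2) * (1 - k₂ ^ 2 * s ^ 2)) := by
    rw [Kint, intervalIntegral.integral_of_le (by norm_num : (0:ℝ) ≤ 1),
      integral_Ioc_eq_integral_Ioo]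
  rw [e1, e2]
  apply MeasureTheory.setIntegral_mono_on (Kint_integrand_intOn h1) (Kint_integrand_intOn h2)
    measurableSet_Ioo
  intro s hs
  obtain ⟨h0, hs1⟩ := hs
  have hq : (0:ℝ) < 1 - s^2 := by nlinarith
  have hks2 : (0:ℝ) < 1 - k₂^2*s^2 := by nlinarith [h2.1, h2.2]
  have hks1 : (0:ℝ) < 1 - k₁^2*s^2 := by nlinarith [h1.1, h2.2]
  apply one_div_le_one_div_of_le (Real.sqrt_pos.2 (by positivity))
  apply Real.sqrt_le_sqrt
  have : k₁^2 ≤ k₂^2 := by nlinarith [h1.1]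
  nlinarith [mul_le_mul_of_nonneg_right this (sq_nonneg s), mul_le_mul_of_nonneg_left
    (mul_le_mul_of_nonneg_right this (sq_nonneg s)) hq.le]

lemma Kint_nonneg (k : ℝ) : 0 ≤ Kint k := by
  apply intervalIntegral.integral_nonneg (by norm_num : (0:ℝ) ≤ 1)
  intro u _
  positivity

theorem stmt14 (n : ℕ) (hn : 0 < n) (δ γ : ℝ) (hδ : 0 < δ) (hγ : 0 < γ) (k : ℝ → ℝ)
    (hk : ∀ ε ∈ Set.Ioo (0:ℝ) (1 / (n * Real.pi)),
      k ε ∈ Set.Ioo (0:ℝ) 1 ∧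
      Real.sqrt (1 + (k ε) ^ 2) * Kint (k ε) = 1 / (2 * n * ε))
    (a b Q D τ : ℝ → ℝ)
    (ha : ∀ ε, a ε = 1 - 2 / (1 + (k ε) ^ 2) * (1 - Eint (k ε) / Kint (k ε)))
    (hb : ∀ ε, b ε = ((1 - (k ε) ^ 2) / (1 + (k ε) ^ 2)) ^ 2)
    (hQ : ∀ ε, Q ε = 2 * (δ + 2) - 3 * δ * a ε)
    (hD : ∀ ε, D ε = (Q ε) ^ 2 + 24 * (δ + 2) * b ε)
    (hτ : ∀ ε, τ ε = 2 * (δ + 2) * γ / (Real.sqrt (D ε) - Q ε)) :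
    Filter.Tendsto
      (fun ε : ℝ => τ ε * Real.exp (-(Real.sqrt 2) / (n * ε)))
      (nhdsWithin 0 (Set.Ioo (0:ℝ) (1 / (n * Real.pi))))
      (nhds (γ * (δ + 2) / 192)) := by
  have hn' : (0:ℝ) < n := by exact_mod_cast hn
  set l := nhdsWithin (0:ℝ) (Set.Ioo (0:ℝ) (1 / (n * Real.pi))) with hl_def
  have hmemEv : ∀ᶠ ε in l, ε ∈ Set.Ioo (0:ℝ) (1 / (n * Real.pi)) := eventually_mem_nhdsWithin
  have hmono : l ≤ nhdsWithin (0:ℝ) (Set.Ioi 0) := nhdsWithin_mono 0 Set.Ioo_subset_Ioi_self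
  have hinv : Tendsto (fun ε : ℝ => ε⁻¹) l atTop := tendsto_inv_nhdsGT_zero.mono_left hmono
  have T1 : Tendsto (fun ε : ℝ => 1/(2*(n:ℝ)*ε)) l atTop := by
    have h := hinv.const_mul_atTop (show (0:ℝ) < (2*(n:ℝ))⁻¹ by positivity)
    apply h.congr
    intro ε
    rw [one_div, mul_inv (2*(n:ℝ)) ε]
  -- Kint (k ε) → ∞
  have T2 : Tendsto (fun ε => Kint (k ε)) l atTop := by
    have base := T1.const_mul_atTop (show (0:ℝ) < (Real.sqrt 2)⁻¹ by positivity)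
    apply tendsto_atTop_mono' l ?_ base
    filter_upwards [hmemEv] with ε hε
    obtain ⟨hkm, hkeq⟩ := hk ε hε
    have hsp : 0 < Real.sqrt (1+(k ε)^2) := by positivity
    have hsle : Real.sqrt (1+(k ε)^2) ≤ Real.sqrt 2 :=
      Real.sqrt_le_sqrt (by nlinarith [hkm.1, hkm.2])
    have hKval : Kint (k ε) = (1/(2*(n:ℝ)*ε)) / Real.sqrt (1+(k ε)^2) := by
      rw [eq_div_iff (ne_of_gt hsp), mul_comm]
      exact hkeq
    have hεp : 0 < ε := hε.1
    rw [hKval]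
    have : (1/(2*(n:ℝ)*ε)) / Real.sqrt 2 ≤ (1/(2*(n:ℝ)*ε)) / Real.sqrt (1+(k ε)^2) :=
      div_le_div_of_nonneg_left (by positivity) hsp hsle
    calc (Real.sqrt 2)⁻¹ * (1/(2*(n:ℝ)*ε)) = (1/(2*(n:ℝ)*ε)) / Real.sqrt 2 := by
          ring
      _ ≤ _ := this
  -- k ε → 1 within Ioo 0 1
  have T3 : Tendsto (fun ε => k ε) l (nhdsWithin 1 (Set.Ioo (0:ℝ) 1)) := by
    rw [tendsto_nhdsWithin_iff]
    constructor
    · rw [tendsto_order]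
      constructor
      · intro c hc
        set c₀ := max c (1/2) with hc₀def
        have hc₀ : c₀ ∈ Set.Ioo (0:ℝ) 1 :=
          ⟨lt_of_lt_of_le (by norm_num) (le_max_right _ _), max_lt hc (by norm_num)⟩
        have hev := T1.eventually_gt_atTop (Real.sqrt 2 * Kint c₀)
        filter_upwards [hev, hmemEv] with ε h1 h2
        obtain ⟨hkm, hkeq⟩ := hk ε h2
        by_contra hcon
        push_neg at hcon
        have hk_le : k ε ≤ c₀ := le_trans hcon (le_max_left _ _)
        have hKle : Kint (k ε) ≤ Kint c₀ := Kint_mono hkm hc₀ hk_le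
        have hsle : Real.sqrt (1+(k ε)^2) ≤ Real.sqrt 2 :=
          Real.sqrt_le_sqrt (by nlinarith [hkm.1, hkm.2])
        have hcontr : 1/(2*(n:ℝ)*ε) ≤ Real.sqrt 2 * Kint c₀ := by
          rw [← hkeq]
          exact mul_le_mul hsle hKle (Kint_nonneg _) (Real.sqrt_nonneg 2)
        linarith
      · intro c hc
        filter_upwards [hmemEv] with ε h2
        exact lt_trans (hk ε h2).1.2 hc
    · filter_upwards [hmemEv] with ε h2
      exact (hk ε h2).1
  have T3' : Tendsto (fun ε => k ε) l (nhds 1) := T3.mono_right nhdsWithin_le_nhds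
  -- E/K → 0
  have hEK : Tendsto (fun ε => Eint (k ε) / Kint (k ε)) l (nhds 0) := by
    have hup : Tendsto (fun ε => CE / Kint (k ε)) l (nhds 0) :=
      Tendsto.div_atTop tendsto_const_nhds T2
    have hKpos : ∀ᶠ ε in l, 0 < Kint (k ε) := T2.eventually_gt_atTop 0
    apply tendsto_of_tendsto_of_tendsto_of_le_of_le' tendsto_const_nhds hup
    · filter_upwards [hKpos] with ε h1
      exact div_nonneg (Eint_nonneg _) h1.le
    · filter_upwards [hKpos, hmemEv] with ε h1 h2
      gcongr
      exact Eint_le (hk ε h2).1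
  -- a → 0
  have aL : Tendsto a l (nhds 0) := by
    have hct : ContinuousAt (fun x : ℝ => 2/(1+x^2)) 1 := by
      apply ContinuousAt.div continuousAt_const
        ((continuous_const.add (continuous_pow 2)).continuousAt)
      norm_num
    have h2k0 := hct.tendsto.comp T3'
    have h2k : Tendsto (fun ε => 2/(1+(k ε)^2)) l (nhds 1) := by
      convert h2k0 using 2 <;> norm_num
    have hsub : Tendsto (fun ε => 1 - Eint (k ε) / Kint (k ε)) l (nhds 1) := by
      have := (tendsto_const_nhds : Tendsto (fun _ : ℝ => (1:ℝ)) l (nhds 1)).sub hEK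
      rwa [sub_zero] at this
    have hfin := (tendsto_const_nhds : Tendsto (fun _ : ℝ => (1:ℝ)) l (nhds 1)).sub (h2k.mul hsub)
    rw [show (1:ℝ) - 1*1 = 0 by ring] at hfin
    apply hfin.congr
    intro ε
    rw [ha ε]
  -- Q → 2(δ+2)
  have QL : Tendsto Q l (nhds (2*(δ+2))) := by
    have := (tendsto_const_nhds : Tendsto (fun _ : ℝ => 2*(δ+2)) l (nhds (2*(δ+2)))).sub
      (aL.const_mul (3*δ))
    rw [show 3*δ*(0:ℝ) = 0 by ring, sub_zero] at this
    apply this.congr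
    intro ε
    rw [hQ ε]
  -- b → 0
  have bL : Tendsto b l (nhds 0) := by
    have hct : ContinuousAt (fun x : ℝ => ((1-x^2)/(1+x^2))^2) 1 := by
      apply ContinuousAt.pow
      apply ContinuousAt.div
        ((continuous_const.sub (continuous_pow 2)).continuousAt)
        ((continuous_const.add (continuous_pow 2)).continuousAt)
      norm_num
    have h0 := hct.tendsto.comp T3'
    have h1 : Tendsto (fun ε => ((1-(k ε)^2)/(1+(k ε)^2))^2) l (nhds 0) := by
      convert h0 using 2 <;> norm_num
    apply h1.congr
    intro ε
    rw [hb ε]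
  -- D → (2(δ+2))^2
  have DL : Tendsto D l (nhds ((2*(δ+2))^2)) := by
    have := (QL.pow 2).add (bL.const_mul (24*(δ+2)))
    rw [show 24*(δ+2)*(0:ℝ) = 0 by ring, add_zero] at this
    apply this.congr
    intro ε
    rw [hD ε]
  have sqrtDL : Tendsto (fun ε => Real.sqrt (D ε)) l (nhds (2*(δ+2))) := by
    have h0 := (Real.continuous_sqrt.tendsto _).comp DL
    have hval : Real.sqrt ((2*(δ+2))^2) = 2*(δ+2) := Real.sqrt_sq (by positivity)
    rwa [hval] at h0
  have SL : Tendsto (fun ε => Real.sqrt (D ε) + Q ε) l (nhds (2*(δ+2) + 2*(δ+2))) :=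
    sqrtDL.add QL
  -- the exponential factor
  have G1L : Tendsto (fun ε => Kint (k ε) + Real.log (Real.sqrt (1-(k ε)^2))) l
      (nhds (Real.log 4)) := K_asymp.comp T3
  have G2L : Tendsto (fun ε => (1-(k ε)^2) * Kint (k ε)) l (nhds 0) := oneSubSq_K.comp T3
  have G3L : Tendsto (fun ε => 2*Real.sqrt 2/(Real.sqrt 2 + Real.sqrt (1+(k ε)^2))) l
      (nhds 1) := by
    have hct : ContinuousAt (fun x : ℝ => 2*Real.sqrt 2/(Real.sqrt 2 + Real.sqrt (1+x^2))) 1 := by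
      apply ContinuousAt.div continuousAt_const
      · exact (continuous_const.add ((continuous_const.add (continuous_pow 2)).sqrt)).continuousAt
      · have h1 : (0:ℝ) < Real.sqrt 2 := by positivity
        have h2 : (0:ℝ) ≤ Real.sqrt (1+(1:ℝ)^2) := Real.sqrt_nonneg _
        positivity
    have h0 := hct.tendsto.comp T3'
    convert h0 using 2
    · rfl
    have hv : Real.sqrt (1+(1:ℝ)^2) = Real.sqrt 2 := by norm_num
    rw [hv, eq_comm, div_eq_one_iff_eq (by positivity)]
    ring
  have argL : Tendsto (fun ε => -(4*(Kint (k ε) + Real.log (Real.sqrt (1-(k ε)^2))))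
      + (2*Real.sqrt 2/(Real.sqrt 2 + Real.sqrt (1+(k ε)^2))) * ((1-(k ε)^2) * Kint (k ε))) l
      (nhds (-(4*Real.log 4) + 1*0)) :=
    ((G1L.const_mul 4).neg).add (G3L.mul G2L)
  have expL : Tendsto (fun ε => Real.exp (-(4*(Kint (k ε) + Real.log (Real.sqrt (1-(k ε)^2))))
      + (2*Real.sqrt 2/(Real.sqrt 2 + Real.sqrt (1+(k ε)^2))) * ((1-(k ε)^2) * Kint (k ε)))) l
      (nhds (Real.exp (-(4*Real.log 4) + 1*0))) :=
    (Real.continuous_exp.continuousAt.tendsto).comp argL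
  have f2L : Tendsto (fun ε => (1+(k ε)^2)^2) l (nhds 4) := by
    have hct : ContinuousAt (fun x : ℝ => (1+x^2)^2) 1 :=
      ((continuous_const.add (continuous_pow 2)).pow 2).continuousAt
    have h0 := hct.tendsto.comp T3'
    convert h0 using 2 <;> norm_num
  -- the limit of the model function
  have FL : Tendsto (fun ε => γ*(Real.sqrt (D ε) + Q ε)/12 * (1+(k ε)^2)^2
      * Real.exp (-(4*(Kint (k ε) + Real.log (Real.sqrt (1-(k ε)^2))))
        + (2*Real.sqrt 2/(Real.sqrt 2 + Real.sqrt (1+(k ε)^2))) * ((1-(k ε)^2) * Kint (k ε)))) l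
      (nhds (γ*(2*(δ+2) + 2*(δ+2))/12 * 4 * Real.exp (-(4*Real.log 4) + 1*0))) :=
    (((SL.const_mul γ).div_const 12).mul f2L).mul expL
  have hexp4 : Real.exp (-(4*Real.log 4) + 1*0) = 1/256 := by
    rw [show (1:ℝ)*0 = 0 by ring, add_zero]
    rw [show (4:ℝ)*Real.log 4 = Real.log ((4:ℝ)^(4:ℕ)) by rw [Real.log_pow]; norm_num]
    rw [Real.exp_neg, Real.exp_log (by norm_num : (0:ℝ) < (4:ℝ)^(4:ℕ))]
    norm_num
  have hval : γ*(2*(δ+2) + 2*(δ+2))/12 * 4 * Real.exp (-(4*Real.log 4) + 1*0)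
      = γ * (δ + 2) / 192 := by
    rw [hexp4]
    ring
  rw [hval] at FL
  -- final: eventual equality
  apply FL.congr'
  filter_upwards [hmemEv] with ε hε
  obtain ⟨hkm, hkeq⟩ := hk ε hε
  have hεp : 0 < ε := hε.1
  have hκ0 := hkm.1
  have hκ1 := hkm.2
  have hq : (0:ℝ) < 1 - (k ε)^2 := by nlinarith
  have h1k : (0:ℝ) < 1 + (k ε)^2 := by positivity
  have hkp : 0 < Real.sqrt (1-(k ε)^2) := Real.sqrt_pos.2 hq
  have hsp : 0 < Real.sqrt (1+(k ε)^2) := by positivity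
  have hKpos : 0 < Kint (k ε) := by
    have h2 : 0 < 1/(2*(n:ℝ)*ε) := by positivity
    nlinarith [hkeq, hsp, Kint_nonneg (k ε)]
  have hbpos : 0 < b ε := by
    rw [hb ε]
    exact pow_pos (div_pos hq h1k) 2
  have hDgt : Q ε^2 < D ε := by
    rw [hD ε]
    nlinarith [hbpos]
  have hDnn : 0 ≤ D ε := le_trans (sq_nonneg _) hDgt.le
  have habs : |Q ε| < Real.sqrt (D ε) := by
    rw [← Real.sqrt_sq_eq_abs]
    exact Real.sqrt_lt_sqrt (sq_nonneg _) hDgt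
  have habs' := abs_lt.1 habs
  have hsub : 0 < Real.sqrt (D ε) - Q ε := by linarith [habs'.2]
  have hadd : 0 < Real.sqrt (D ε) + Q ε := by linarith [habs'.1]
  have hsqD : Real.sqrt (D ε)^2 = D ε := Real.sq_sqrt hDnn
  have hτval : τ ε = γ*(Real.sqrt (D ε) + Q ε)/(12 * b ε) := by
    rw [hτ ε, div_eq_div_iff (ne_of_gt hsub) (by positivity)]
    linear_combination (-γ)*hsqD + (-γ)*(hD ε)
  -- exponent identities
  have hs2 : (Real.sqrt 2)^2 = 2 := Real.sq_sqrt (by norm_num)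
  have hss : (Real.sqrt (1+(k ε)^2))^2 = 1+(k ε)^2 := Real.sq_sqrt (by positivity)
  have hden : 0 < Real.sqrt 2 + Real.sqrt (1+(k ε)^2) := by positivity
  have hg3 : (2*Real.sqrt 2/(Real.sqrt 2 + Real.sqrt (1+(k ε)^2))) * (1-(k ε)^2)
      = 4 - 2*Real.sqrt 2*Real.sqrt (1+(k ε)^2) := by
    rw [div_mul_eq_mul_div, div_eq_iff (ne_of_gt hden)]
    linear_combination (2*Real.sqrt (1+(k ε)^2))*hs2 + (2*Real.sqrt 2)*hss
  have hX : -(Real.sqrt 2)/((n:ℝ)*ε) = -(2*Real.sqrt 2*(Real.sqrt (1+(k ε)^2) * Kint (k ε))) := by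
    rw [hkeq]
    field_simp
  have harg : -(4*(Kint (k ε) + Real.log (Real.sqrt (1-(k ε)^2))))
      + (2*Real.sqrt 2/(Real.sqrt 2 + Real.sqrt (1+(k ε)^2))) * ((1-(k ε)^2) * Kint (k ε))
      = -(Real.sqrt 2)/((n:ℝ)*ε) + -(4*Real.log (Real.sqrt (1-(k ε)^2))) := by
    rw [hX]
    rw [show (2*Real.sqrt 2/(Real.sqrt 2 + Real.sqrt (1+(k ε)^2))) * ((1-(k ε)^2) * Kint (k ε))
      = ((2*Real.sqrt 2/(Real.sqrt 2 + Real.sqrt (1+(k ε)^2))) * (1-(k ε)^2)) * Kint (k ε) by ring]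
    rw [hg3]
    ring
  have hlog4 : Real.exp (-(4*Real.log (Real.sqrt (1-(k ε)^2)))) = ((1-(k ε)^2)^2)⁻¹ := by
    rw [show (4:ℝ)*Real.log (Real.sqrt (1-(k ε)^2))
        = Real.log ((Real.sqrt (1-(k ε)^2))^(4:ℕ)) by rw [Real.log_pow]; norm_num]
    rw [Real.exp_neg, Real.exp_log (by positivity)]
    rw [show (Real.sqrt (1-(k ε)^2))^(4:ℕ) = ((Real.sqrt (1-(k ε)^2))^2)^2 by ring,
      Real.sq_sqrt hq.le]
  have hexpand : Real.exp (-(4*(Kint (k ε) + Real.log (Real.sqrt (1-(k ε)^2))))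
      + (2*Real.sqrt 2/(Real.sqrt 2 + Real.sqrt (1+(k ε)^2))) * ((1-(k ε)^2) * Kint (k ε)))
      = Real.exp (-(Real.sqrt 2)/((n:ℝ)*ε)) * ((1-(k ε)^2)^2)⁻¹ := by
    rw [harg, Real.exp_add, hlog4]
  show γ*(Real.sqrt (D ε) + Q ε)/12 * (1+(k ε)^2)^2 * _ = τ ε * Real.exp (-(Real.sqrt 2)/((n:ℝ)*ε))
  rw [hexpand, hτval, hb ε]
  have hne1 : (1-(k ε)^2) ≠ 0 := ne_of_gt hq
  have hne2 : (1+(k ε)^2) ≠ 0 := ne_of_gt h1k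
  field_simp
end

section
/- Let τ, γ, δ > 0, a > 0, and b ≥ 0. Then every real root λ of the cubic g(·,τ) satisfies λ ≤ −1 + √(1 + 3b); equivalently, if λ ∈ ℝ and λ > −1 + √(1 + 3b), then g(λ,τ) ≠ 0. (In the shadow system this says that for every τ > 0 all real eigenvalues arising from the nonlocal cubic are bounded above by the principal eigenvalue μ₀ = −1+√(1+3(1−ρ²)²) of the scalar linearization, which is exponentially small in ε; this yields metastability of the multi-layer stationary solutions for large τ.) -/
open Real

theorem stmt17 (τ γ δ a b : ℝ) (hτ : 0 < τ) (hγ : 0 < γ) (hδ : 0 < δ)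
    (ha : 0 < a) (hb : 0 ≤ b)
    (g : ℝ → ℝ → ℝ)
    (hg : ∀ lam τ' : ℝ, g lam τ' =
      (τ' / γ) * lam ^ 3 + (2 * τ' / γ + 1) * lam ^ 2 +
      (δ + 2 - 3 * (τ' / γ) * b) * lam + 3 * δ * a - 3 * b) :
    ∀ lam : ℝ, -1 + Real.sqrt (1 + 3 * b) < lam → g lam τ ≠ 0 := by
  intro lam hlam
  rw [hg]
  have hs : Real.sqrt (1 + 3 * b) ^ 2 = 1 + 3 * b := Real.sq_sqrt (by linarith)
  have hs1 : (1:ℝ) ≤ Real.sqrt (1 + 3 * b) := by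
    nlinarith [Real.sqrt_nonneg (1 + 3 * b), hs]
  have hlam0 : 0 < lam := by linarith
  have hkey : 0 < lam ^ 2 + 2 * lam - 3 * b := by nlinarith
  have hq : 0 < τ / γ := div_pos hτ hγ
  have hpos : 0 < (τ / γ * lam + 1) * (lam ^ 2 + 2 * lam - 3 * b) + δ * (lam + 3 * a) := by
    positivity
  have heq : τ / γ * lam ^ 3 + (2 * τ / γ + 1) * lam ^ 2 + (δ + 2 - 3 * (τ / γ) * b) * lam +
      3 * δ * a - 3 * b
      = (τ / γ * lam + 1) * (lam ^ 2 + 2 * lam - 3 * b) + δ * (lam + 3 * a) := by ring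
  rw [heq]
  exact hpos.ne'
end
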